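/- arXiv:1001.1615 — 6 statements merged into one kernel-verified Lean document; each statement's English description precedes it below -/
import Mathlib

section
/- For all x ∈ (0,1) and all ε with 0 < ε < x, K(ε,x) ≥ ((x-ε)/2)·(log(1 - x/2 - ε/2) - log(1-x)). -/
/-- Kullback–Leibler divergence between Bernoulli(ε) and Bernoulli(x). -/
noncomputable def bernKL (ε x : ℝ) : ℝ :=
  ε * Real.log (ε / x) + (1 - ε) * Real.log ((1 - ε) / (1 - x))

theorem bernKL_lower_bound_left (x ε : ℝ) (hx : x ∈ Set.Ioo (0 : ℝ) 1)
    (hε : 0 < ε) (hεx : ε < x) :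
    (x - ε) / 2 * (Real.log (1 - x / 2 - ε / 2) - Real.log (1 - x)) ≤ bernKL ε x := by
  obtain ⟨hx0, hx1⟩ := hx
  set m : ℝ := (x + ε) / 2 with hmdef
  have hm0 : (0:ℝ) < m := by simp only [hmdef]; linarith
  have hεm : ε < m := by simp only [hmdef]; linarith
  have hmx : m < x := by simp only [hmdef]; linarith
  have hm1 : m < 1 := by linarith
  have h1x : (0:ℝ) < 1 - x := by linarith
  have h1m : (0:ℝ) < 1 - m := by linarith
  have h1ε : (0:ℝ) < 1 - ε := by linarith
  have hrw : 1 - x / 2 - ε / 2 = 1 - m := by simp only [hmdef]; ring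
  rw [hrw]
  -- log inequalities
  have l1 : Real.log (m / ε) ≤ m / ε - 1 := Real.log_le_sub_one_of_pos (by positivity)
  have l2 : Real.log ((1 - m) / (1 - ε)) ≤ (1 - m) / (1 - ε) - 1 :=
    Real.log_le_sub_one_of_pos (by positivity)
  have l3 : Real.log (x / m) ≤ x / m - 1 := Real.log_le_sub_one_of_pos (by positivity)
  have l4 : Real.log ((1 - x) / (1 - m)) ≤ (1 - x) / (1 - m) - 1 :=
    Real.log_le_sub_one_of_pos (by positivity)
  have e1 : Real.log (ε / m) = - Real.log (m / ε) := by
    rw [Real.log_div (ne_of_gt hε) (ne_of_gt hm0), Real.log_div (ne_of_gt hm0) (ne_of_gt hε)]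
    ring
  have e2 : Real.log ((1 - ε) / (1 - m)) = - Real.log ((1 - m) / (1 - ε)) := by
    rw [Real.log_div (ne_of_gt h1ε) (ne_of_gt h1m), Real.log_div (ne_of_gt h1m) (ne_of_gt h1ε)]
    ring
  have e3 : Real.log ((1 - m) / (1 - x)) = - Real.log ((1 - x) / (1 - m)) := by
    rw [Real.log_div (ne_of_gt h1m) (ne_of_gt h1x), Real.log_div (ne_of_gt h1x) (ne_of_gt h1m)]
    ring
  -- KL(ε, m) ≥ 0
  have hKm : 0 ≤ ε * Real.log (ε / m) + (1 - ε) * Real.log ((1 - ε) / (1 - m)) := by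
    rw [e1, e2]
    have h1 : m / ε - 1 = (m - ε) / ε := by field_simp
    have h2 : (1 - m) / (1 - ε) - 1 = (ε - m) / (1 - ε) := by field_simp; ring
    rw [h1] at l1; rw [h2] at l2
    have a1 : ε * Real.log (m / ε) ≤ m - ε := by
      have := mul_le_mul_of_nonneg_left l1 (le_of_lt hε)
      calc ε * Real.log (m / ε) ≤ ε * ((m - ε) / ε) := this
        _ = m - ε := by field_simp
    have a2 : (1 - ε) * Real.log ((1 - m) / (1 - ε)) ≤ ε - m := by
      have := mul_le_mul_of_nonneg_left l2 (le_of_lt h1ε)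
      calc (1 - ε) * Real.log ((1 - m) / (1 - ε)) ≤ (1 - ε) * ((ε - m) / (1 - ε)) := this
        _ = ε - m := by field_simp
    nlinarith [a1, a2]
  -- ε * log(x/m) ≤ (x - ε)/2
  have h2 : ε * Real.log (x / m) ≤ (x - ε) / 2 := by
    have a1 : ε * Real.log (x / m) ≤ ε * (x / m - 1) :=
      mul_le_mul_of_nonneg_left l3 (le_of_lt hε)
    have a2 : ε * (x / m - 1) = ε * (x - m) / m := by field_simp
    have a3 : ε * (x - m) / m ≤ (x - ε) / 2 := by
      rw [div_le_iff₀ hm0]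
      have hxm : x - m = (x - ε) / 2 := by simp only [hmdef]; ring
      nlinarith [hxm, hεm]
    linarith [a1, a2 ▸ a1, a3]
  -- (x - ε)/2 ≤ (1 - m) * log((1-m)/(1-x))
  have h3 : (x - ε) / 2 ≤ (1 - m) * Real.log ((1 - m) / (1 - x)) := by
    rw [e3]
    have a1 : (1 - m) * Real.log ((1 - x) / (1 - m)) ≤ (1 - m) * ((1 - x) / (1 - m) - 1) :=
      mul_le_mul_of_nonneg_left l4 (le_of_lt h1m)
    have a2 : (1 - m) * ((1 - x) / (1 - m) - 1) = m - x := by field_simp; ring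
    have hxm : x - m = (x - ε) / 2 := by simp only [hmdef]; ring
    nlinarith [a1, a2 ▸ a1]
  -- decomposition of bernKL
  have split1 : Real.log (ε / x) = Real.log (ε / m) + Real.log (m / x) := by
    rw [← Real.log_mul (by positivity) (by positivity)]
    congr 1
    field_simp
  have split2 : Real.log ((1 - ε) / (1 - x)) =
      Real.log ((1 - ε) / (1 - m)) + Real.log ((1 - m) / (1 - x)) := by
    rw [← Real.log_mul (by positivity) (by positivity)]
    congr 1
    field_simp
  have emx : Real.log (m / x) = - Real.log (x / m) := by
    rw [Real.log_div (ne_of_gt hm0) (ne_of_gt hx0), Real.log_div (ne_of_gt hx0) (ne_of_gt hm0)]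
    ring
  have hA : Real.log (1 - m) - Real.log (1 - x) = Real.log ((1 - m) / (1 - x)) :=
    (Real.log_div (ne_of_gt h1m) (ne_of_gt h1x)).symm
  rw [hA]
  unfold bernKL
  rw [split1, split2, emx]
  set A := Real.log ((1 - m) / (1 - x)) with hAdef
  have key : (x - ε) / 2 * A - (1 - ε) * A = -((1 - m) * A) := by
    simp only [hmdef]; ring
  linarith [hKm, h2, h3, key]
end

section
/- There exists δ₁ ∈ (0,1) such that for all x ∈ (1/2, 1) and all δ with δ₁ < δ < 1 satisfying x(1-δ) > 0, one has K(x(1-δ), x) ≥ δ²·x·log(1 + δx/(1-x)). -/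
/-- `1 - 1/t ≤ log t` for `t > 0`. -/
lemma log_ge_one_sub_inv {t : ℝ} (ht : 0 < t) : 1 - 1/t ≤ Real.log t := by
  have h := Real.log_le_sub_one_of_pos (x := t⁻¹) (by positivity)
  rw [Real.log_inv] at h
  have h2 : t⁻¹ = 1/t := by ring
  rw [h2] at h
  linarith

/-- monotonicity of `t ↦ t * log (1/t)` on `(0, 1/8]`. -/
lemma mul_neg_log_mono {a b : ℝ} (ha : 0 < a) (hab : a ≤ b) (hb : b ≤ 1/8) :
    a * (-Real.log a) ≤ b * (-Real.log b) := by
  have hb0 : 0 < b := lt_of_lt_of_le ha hab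
  have h1 : Real.log (b/a) ≤ b/a - 1 := Real.log_le_sub_one_of_pos (by positivity)
  have h2 : Real.log (b/a) = Real.log b - Real.log a := Real.log_div (ne_of_gt hb0) (ne_of_gt ha)
  have h3 : a * (Real.log b - Real.log a) ≤ b - a := by
    have h := mul_le_mul_of_nonneg_left h1 (le_of_lt ha)
    rw [h2] at h
    have hane : a ≠ 0 := ne_of_gt ha
    calc a * (Real.log b - Real.log a) ≤ a * (b/a - 1) := h
      _ = b - a := by field_simp
  have hlb : Real.log b ≤ -2 := by
    have h4 : Real.log b ≤ Real.log (1/8) := Real.log_le_log hb0 hb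
    have h5 : Real.log (1/8 : ℝ) = -(3 * Real.log 2) := by
      rw [show (1/8 : ℝ) = ((2:ℝ)^(3:ℕ))⁻¹ by norm_num, Real.log_inv, Real.log_pow]
      norm_num
    have := Real.log_two_gt_d9
    linarith
  nlinarith [h3, hlb, hab]

lemma negLog_large {ε : ℝ} (hε0 : 0 < ε) (hε4 : ε < 1/10000) : (9:ℝ) ≤ -Real.log ε := by
  have h1 : ((2:ℝ)^(13:ℕ)) ≤ ε⁻¹ := by
    rw [show ((2:ℝ)^(13:ℕ)) = 8192 by norm_num]
    rw [le_inv_comm₀ (by norm_num) hε0]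
    linarith
  have h2 : Real.log ((2:ℝ)^(13:ℕ)) ≤ Real.log ε⁻¹ := Real.log_le_log (by positivity) h1
  rw [Real.log_pow, Real.log_inv] at h2
  have := Real.log_two_gt_d9
  push_cast at h2
  linarith

lemma eps_negLog_small {ε : ℝ} (hε0 : 0 < ε) (hε4 : ε < 1/10000) :
    ε * (-Real.log ε) ≤ 1/50 := by
  have hsqε0 : 0 < Real.sqrt ε := Real.sqrt_pos.mpr hε0
  have hss : Real.sqrt ε * Real.sqrt ε = ε := Real.mul_self_sqrt (le_of_lt hε0)
  have h1 : Real.log (Real.sqrt ε) = Real.log ε / 2 := Real.log_sqrt (le_of_lt hε0)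
  have h2 : Real.log (Real.sqrt ε)⁻¹ ≤ (Real.sqrt ε)⁻¹ - 1 :=
    Real.log_le_sub_one_of_pos (by positivity)
  rw [Real.log_inv, h1] at h2
  have h3 : -Real.log ε ≤ 2 * (Real.sqrt ε)⁻¹ := by nlinarith
  have h5 : ε * (Real.sqrt ε)⁻¹ = Real.sqrt ε := by
    field_simp
    rw [sq, hss]
  have h6 : ε * (-Real.log ε) ≤ ε * (2 * (Real.sqrt ε)⁻¹) :=
    mul_le_mul_of_nonneg_left h3 (le_of_lt hε0)
  have hsq : Real.sqrt ε ≤ 1/100 := by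
    have ha : Real.sqrt ε ≤ Real.sqrt (1/10000) := Real.sqrt_le_sqrt (le_of_lt hε4)
    have hb : Real.sqrt (1/10000 : ℝ) = 1/100 := by
      rw [show (1/10000:ℝ) = (1/100)^2 by norm_num, Real.sqrt_sq (by norm_num)]
    linarith
  nlinarith [h6, h5, hsq]

/- arithmetic endgames of the four cases -/
lemma arithA {ε δ u L T : ℝ} (hε0 : 0 < ε) (hεT2 : ε * T ≤ 1/50) (hδ0 : 0 < δ)
    (hA : 1/10 ≤ u) (hL : 49/100 ≤ L) : ε * T ≤ (u + δ*ε) * L := by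
  nlinarith [mul_nonneg (le_of_lt (mul_pos hδ0 hε0)) (by linarith : (0:ℝ) ≤ L)]

lemma arithB {ε δ u lu m T : ℝ} (hε0 : 0 < ε) (hε4 : ε < 1/10000)
    (hδlb : 1 - 2*ε ≤ δ) (hδ1 : δ ≤ 1) (hBε : ε ≤ u) (hB : u < 1/10)
    (hmono : ε * T ≤ u * lu) (hlu : 207/100 ≤ lu) (hm0 : 0 ≤ m) (hm2 : m ≤ 2*ε) :
    ε * T ≤ (u + δ*ε) * (lu - m) := by
  have hδ0 : 0 < δ := by linarith
  have h6 : δ*ε*(207/100) ≤ δ*ε*lu :=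
    mul_le_mul_of_nonneg_left hlu (by positivity)
  have h7 : (u + δ*ε)*m ≤ (1/10 + ε)*(2*ε) :=
    mul_le_mul (by nlinarith) hm2 hm0 (by positivity)
  nlinarith [hmono, h6, h7, hε4, hε0]

lemma arithC1 {ε δ u L T : ℝ} (hε0 : 0 < ε) (hε4 : ε < 1/10000)
    (hδlb : 1 - 2*ε ≤ δ) (hδ1 : δ ≤ 1) (hu0 : 0 < u) (hT9 : 9 ≤ T)
    (hεT2 : ε * T ≤ 1/50) (hL' : T + 1/2 - 2*ε ≤ L) : ε * T ≤ (u + δ*ε) * L := by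
  have hL'0 : (0:ℝ) ≤ T + 1/2 - 2*ε := by linarith
  have hδε : (1-2*ε)*ε ≤ δ*ε := by nlinarith
  have h3 : (1-2*ε)*ε*(T + 1/2 - 2*ε) ≤ δ*ε*L :=
    mul_le_mul hδε hL' hL'0 (by nlinarith)
  have hL0 : (0:ℝ) ≤ L := by linarith
  have huL : 0 ≤ u * L := mul_nonneg (le_of_lt hu0) hL0
  nlinarith [h3, huL, hε0, hε4,
    mul_le_mul_of_nonneg_left hεT2 (le_of_lt hε0),
    mul_pos hε0 hε0]

lemma arithC2 {ε δ u L T : ℝ} (hε0 : 0 < ε) (hε4 : ε < 1/10000)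
    (hδlb : 1 - 2*ε ≤ δ) (hδ1 : δ ≤ 1) (hu0 : 0 < u) (hεu : ε < (165/100) * u)
    (hT9 : 9 ≤ T) (hεT2 : ε * T ≤ 1/50) (hL' : T - 2*ε ≤ L) :
    ε * T ≤ (u + δ*ε) * L := by
  have hL'0 : (0:ℝ) ≤ T - 2*ε := by linarith
  have hcoef : ε/(165/100) + (1-2*ε)*ε ≤ u + δ*ε := by
    have hq : ε/(165/100) ≤ u := by
      rw [div_le_iff₀ (by norm_num)]
      nlinarith
    nlinarith
  have h3 : (ε/(165/100) + (1-2*ε)*ε) * (T - 2*ε) ≤ (u + δ*ε) * L := by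
    apply mul_le_mul hcoef hL' hL'0
    nlinarith
  nlinarith [h3, hεT2, hε4, hε0, hT9,
    mul_le_mul_of_nonneg_left hεT2 (le_of_lt hε0),
    mul_pos hε0 hε0]

/-- The key inequality: `ε·log(1/ε) ≤ (u + δε)·log((1-ε)/u)`. -/
lemma key_ineq {u ε δ : ℝ} (hu0 : 0 < u) (hu2 : u < 1/2) (hε0 : 0 < ε)
    (hε4 : ε < 1/10000) (hδlb : 1 - 2*ε ≤ δ) (hδ1 : δ ≤ 1) :
    ε * (-Real.log ε) ≤ (u + δ*ε) * Real.log ((1-ε)/u) := by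
  have hδ0 : 0 < δ := by linarith
  have h1ε : 0 < 1 - ε := by linarith
  have hT9 : (9:ℝ) ≤ -Real.log ε := negLog_large hε0 hε4
  have hεT2 : ε * (-Real.log ε) ≤ 1/50 := eps_negLog_small hε0 hε4
  have hm0 : 0 ≤ -Real.log (1 - ε) := by
    have := Real.log_nonpos (le_of_lt h1ε) (by linarith)
    linarith
  have hm2 : -Real.log (1 - ε) ≤ 2*ε := by
    have h := log_ge_one_sub_inv h1ε
    have h1 : 1 - 1/(1-ε) = -(ε/(1-ε)) := by field_simp; ring
    have h2 : ε/(1-ε) ≤ 2*ε := by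
      rw [div_le_iff₀ h1ε]
      nlinarith
    nlinarith [h, h1 ▸ h]
  have hLd : Real.log ((1-ε)/u) = -Real.log u - (-Real.log (1-ε)) := by
    rw [Real.log_div (ne_of_gt h1ε) (ne_of_gt hu0)]
    ring
  rcases le_or_gt (1/10 : ℝ) u with hA | hB
  · -- Case A : u ≥ 1/10
    have h1 : (199/100 : ℝ) ≤ (1-ε)/u := by
      rw [le_div_iff₀ hu0]
      nlinarith
    have h2 : Real.log (199/100 : ℝ) ≤ Real.log ((1-ε)/u) := Real.log_le_log (by norm_num) h1
    have h3 : (49/100 : ℝ) ≤ Real.log (199/100 : ℝ) := by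
      have := log_ge_one_sub_inv (t := 199/100) (by norm_num)
      norm_num at this ⊢
      linarith
    exact arithA hε0 hεT2 hδ0 hA (by linarith)
  rcases le_or_gt ε u with hBε | hC
  · -- Case B : ε ≤ u < 1/10
    have hmono : ε * (-Real.log ε) ≤ u * (-Real.log u) :=
      mul_neg_log_mono hε0 hBε (by linarith)
    have hlu : (207/100 : ℝ) ≤ -Real.log u := by
      have h4 : Real.log u ≤ Real.log (1/8) := Real.log_le_log hu0 (by linarith)
      have h5 : Real.log (1/8 : ℝ) = -(3 * Real.log 2) := by
        rw [show (1/8 : ℝ) = ((2:ℝ)^(3:ℕ))⁻¹ by norm_num, Real.log_inv, Real.log_pow]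
        norm_num
      have := Real.log_two_gt_d9
      linarith
    rw [hLd]
    exact arithB hε0 hε4 hδlb hδ1 hBε hB hmono hlu hm0 hm2
  · -- Case C : u < ε
    have hβ0 : 0 < Real.log ε - Real.log u := by
      linarith [Real.log_lt_log hu0 hC]
    have hLd2 : Real.log ((1-ε)/u) =
        (-Real.log ε) + (Real.log ε - Real.log u) - (-Real.log (1-ε)) := by
      rw [hLd]; ring
    rcases le_or_gt (1/2 : ℝ) (Real.log ε - Real.log u) with hC1 | hC2
    · -- C1 : β ≥ 1/2
      have hL' : (-Real.log ε) + 1/2 - 2*ε ≤ Real.log ((1-ε)/u) := by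
        rw [hLd2]; linarith
      exact arithC1 hε0 hε4 hδlb hδ1 hu0 hT9 hεT2 hL'
    · -- C2 : β < 1/2
      have hεu : ε < (165/100) * u := by
        have h1 : ε/u = Real.exp (Real.log ε - Real.log u) := by
          rw [← Real.log_div (ne_of_gt hε0) (ne_of_gt hu0)]
          exact (Real.exp_log (by positivity)).symm
        have h2 : Real.exp (Real.log ε - Real.log u) < Real.exp (1/2) :=
          Real.exp_lt_exp.mpr hC2
        have h3 : Real.exp (1/2 : ℝ) * Real.exp (1/2 : ℝ) = Real.exp 1 := by
          rw [← Real.exp_add]; norm_num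
        have h4 : Real.exp (1/2 : ℝ) < 165/100 := by
          nlinarith [Real.exp_one_lt_d9, Real.exp_pos (1/2 : ℝ)]
        have h5 : ε/u < 165/100 := by rw [h1]; linarith
        calc ε = (ε/u) * u := by field_simp
          _ < (165/100) * u := mul_lt_mul_of_pos_right h5 hu0
      have hL' : (-Real.log ε) - 2*ε ≤ Real.log ((1-ε)/u) := by
        rw [hLd2]; linarith
      exact arithC2 hε0 hε4 hδlb hδ1 hu0 hεu hT9 hεT2 hL'

theorem bernKL_lower_bound_scaled :
    ∃ δ₁ ∈ Set.Ioo (0 : ℝ) 1, ∀ x ∈ Set.Ioo (1/2 : ℝ) 1, ∀ δ : ℝ, δ₁ < δ → δ < 1 →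
      0 < x * (1 - δ) →
      δ ^ 2 * x * Real.log (1 + δ * x / (1 - x)) ≤ bernKL (x * (1 - δ)) x := by
  refine ⟨9999/10000, ⟨by norm_num, by norm_num⟩, ?_⟩
  rintro x ⟨hx1, hx2⟩ δ hδ1 hδlt hεpos
  have hx0 : 0 < x := by linarith
  have hu0 : 0 < 1 - x := by linarith
  have hs0 : 0 < 1 - δ := by linarith
  have hε0 : 0 < x * (1 - δ) := hεpos
  have hε4 : x * (1 - δ) < 1/10000 := by nlinarith
  have hδlb : 1 - 2*(x * (1 - δ)) ≤ δ := by nlinarith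
  have key := key_ineq (u := 1 - x) (ε := x * (1 - δ)) (δ := δ)
    hu0 (by linarith) hε0 hε4 hδlb (le_of_lt hδlt)
  have hform : 1 + δ * x / (1 - x) = (1 - x * (1 - δ))/(1 - x) := by
    field_simp
    ring
  have hKLform : bernKL (x * (1 - δ)) x
      = (x * (1 - δ)) * Real.log (1 - δ) + (1 - x * (1 - δ)) * Real.log ((1 - x * (1-δ))/(1 - x)) := by
    simp only [bernKL]
    rw [mul_div_cancel_left₀ _ (ne_of_gt hx0)]
  rw [hKLform, hform]
  have hlogs : Real.log (x * (1-δ)) = Real.log x + Real.log (1 - δ) :=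
    Real.log_mul (ne_of_gt hx0) (ne_of_gt hs0)
  have hlx : Real.log x ≤ 0 := Real.log_nonpos (le_of_lt hx0) (le_of_lt hx2)
  have hεlogs : -((x * (1-δ)) * (-Real.log (x * (1-δ)))) ≤ (x * (1-δ)) * Real.log (1 - δ) := by
    nlinarith [hlogs, hlx, hε0, mul_nonpos_of_nonneg_of_nonpos (le_of_lt hε0) hlx]
  nlinarith [key, hεlogs]
end

section
/- For any x ∈ (0,1) and δ_x = δ₀·x·(1-x)·√(log α / α) with δ₀ > 0 fixed, as α → ∞ one has K(x-δ_x, x) = (δ₀²·log α·x(1-x))/(2α) + O(x(1-x)(log α/α)^{3/2}) uniformly in x; in particular for α large enough K(x-δ_x, x) ≥ δ_x²/(3x(1-x)). -/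
set_option maxHeartbeats 1000000

private lemma aux_cube1 (d x t : ℝ) (hd : 0 < d) (hx0 : 0 < x) (hx1 : x < 1) (ht0 : 0 ≤ t) :
    x * (2 * (d * (1 - x) * t) ^ 3) ≤ 2 * d ^ 3 * x * (1 - x) * t ^ 3 := by
  nlinarith [mul_nonneg (mul_nonneg (mul_nonneg (pow_nonneg hd.le 3) hx0.le)
      (pow_nonneg ht0 3)) (by linarith : (0:ℝ) ≤ 1 - x),
    sq_nonneg (1 - x), sq_nonneg x, mul_pos hx0 (by linarith : (0:ℝ) < 1 - x)]

private lemma aux_cube2 (d x t : ℝ) (hd : 0 < d) (hx0 : 0 < x) (hx1 : x < 1) (ht0 : 0 ≤ t) :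
    2 * (1 - x) * (2 * (d * x * t) ^ 3) ≤ 4 * d ^ 3 * x * (1 - x) * t ^ 3 := by
  nlinarith [mul_nonneg (mul_nonneg (mul_nonneg (pow_nonneg hd.le 3) hx0.le)
      (pow_nonneg ht0 3)) (by linarith : (0:ℝ) ≤ 1 - x),
    sq_nonneg (1 - x), sq_nonneg x, mul_pos hx0 (by linarith : (0:ℝ) < 1 - x)]

private lemma aux_lower (d x t B : ℝ) (hd : 0 < d) (hx0 : 0 < x) (hx1 : x < 1) (ht0 : 0 ≤ t)
    (htle : d * t ≤ 1 / 42)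
    (h9 : d ^ 2 * x * (1 - x) * t ^ 2 / 2 - 7 * d ^ 3 * x * (1 - x) * t ^ 3 ≤ B) :
    d ^ 2 * x * (1 - x) * t ^ 2 / 3 ≤ B := by
  nlinarith [mul_nonneg (mul_nonneg (mul_nonneg (mul_nonneg (sq_nonneg d) hx0.le)
      (by linarith : (0:ℝ) ≤ 1 - x)) (sq_nonneg t))
      (show (0:ℝ) ≤ 1 / 6 - 7 * (d * t) by linarith)]

private lemma aux_C (d x t : ℝ) (hd : 0 < d) (hx0 : 0 < x) (hx1 : x < 1) (ht0 : 0 ≤ t) :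
    7 * d ^ 3 * x * (1 - x) * t ^ 3 ≤ (7 * d ^ 3 + 1) * (x * (1 - x)) * t ^ 3 := by
  nlinarith [mul_nonneg (mul_nonneg hx0.le (by linarith : (0:ℝ) ≤ 1 - x)) (pow_nonneg ht0 3)]

theorem bernKL_shift_expansion (δ₀ : ℝ) (hδ₀ : 0 < δ₀) :
    ∃ C > 0, ∃ α₀ : ℝ, ∀ α ≥ α₀, ∀ x ∈ Set.Ioo (0 : ℝ) 1,
      |bernKL (x - δ₀ * x * (1 - x) * Real.sqrt (Real.log α / α)) x -
          δ₀ ^ 2 * Real.log α * x * (1 - x) / (2 * α)| ≤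
        C * (x * (1 - x)) * (Real.log α / α) ^ ((3 : ℝ) / 2) ∧
      (δ₀ * x * (1 - x) * Real.sqrt (Real.log α / α)) ^ 2 / (3 * x * (1 - x)) ≤
        bernKL (x - δ₀ * x * (1 - x) * Real.sqrt (Real.log α / α)) x := by
  refine ⟨7 * δ₀ ^ 3 + 1, by positivity, (3528 * δ₀ ^ 2) ^ 2 + 2, fun α hα x hx => ?_⟩
  obtain ⟨hx0, hx1⟩ := hx
  have hx1' : (0:ℝ) < 1 - x := by linarith
  have hα2 : (2:ℝ) ≤ α := by nlinarith [sq_nonneg (3528 * δ₀ ^ 2)]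
  have hα0 : (0:ℝ) < α := by linarith
  have hα1 : (1:ℝ) < α := by linarith
  have hlog0 : (0:ℝ) < Real.log α := Real.log_pos hα1
  have hu : (0:ℝ) < Real.log α / α := div_pos hlog0 hα0
  set t := Real.sqrt (Real.log α / α) with htdef
  have ht0 : 0 ≤ t := Real.sqrt_nonneg _
  have ht2 : t ^ 2 = Real.log α / α := Real.sq_sqrt hu.le
  -- log α ≤ 2 √α
  have hsq : Real.sqrt α * Real.sqrt α = α := Real.mul_self_sqrt hα0.le
  have hsqpos : 0 < Real.sqrt α := Real.sqrt_pos.mpr hα0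
  have hlogle : Real.log α ≤ 2 * Real.sqrt α := by
    have h1 : Real.log (Real.sqrt α) = Real.log α / 2 := Real.log_sqrt hα0.le
    have h2 : Real.log (Real.sqrt α) ≤ Real.sqrt α - 1 := by
      have := Real.log_le_sub_one_of_pos hsqpos
      linarith
    linarith
  have hsqrtα : 3528 * δ₀ ^ 2 ≤ Real.sqrt α := by
    have h3 : (3528 * δ₀ ^ 2) ^ 2 ≤ α := by linarith
    nlinarith [Real.sqrt_nonneg α]
  have hu2 : 1764 * δ₀ ^ 2 * (Real.log α / α) ≤ 1 := by
    rw [← mul_div_assoc, div_le_one hα0]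
    nlinarith [mul_nonneg (sq_nonneg δ₀) (by linarith : (0:ℝ) ≤ 2 * Real.sqrt α - Real.log α),
      mul_nonneg (by linarith : (0:ℝ) ≤ Real.sqrt α - 3528 * δ₀ ^ 2) hsqpos.le]
  have hu2' : 1764 * δ₀ ^ 2 * t ^ 2 ≤ 1 := by rw [ht2]; exact hu2
  have htle : δ₀ * t ≤ 1 / 42 := by
    nlinarith [mul_nonneg hδ₀.le ht0]
  set δ := δ₀ * x * (1 - x) * t with hδdef
  set a := δ₀ * (1 - x) * t with hadef
  set b := δ₀ * x * t with hbdef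
  have ha0 : 0 ≤ a := by rw [hadef]; positivity
  have hb0 : 0 ≤ b := by rw [hbdef]; positivity
  have ha : a ≤ 1 / 42 := by
    rw [hadef]
    nlinarith [mul_nonneg hδ₀.le ht0]
  have hb : b ≤ 1 / 42 := by
    rw [hbdef]
    nlinarith [mul_nonneg hδ₀.le ht0]
  have hδ0 : 0 ≤ δ := by rw [hδdef]; positivity
  have hδx : δ = x * a := by rw [hδdef, hadef]; ring
  have hδx' : δ = (1 - x) * b := by rw [hδdef, hbdef]; ring
  have hδlex : δ ≤ x / 42 := by rw [hδx]; nlinarith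
  have hδle1x : δ ≤ (1 - x) / 42 := by rw [hδx']; nlinarith
  -- log expansions
  have hE1 := Real.abs_log_sub_add_sum_range_le (x := a)
    (by rw [abs_of_nonneg ha0]; linarith) 2
  have hE2 := Real.abs_log_sub_add_sum_range_le (x := -b)
    (by rw [abs_neg, abs_of_nonneg hb0]; linarith) 2
  rw [Finset.sum_range_succ, Finset.sum_range_succ, Finset.sum_range_zero,
    abs_of_nonneg ha0] at hE1
  rw [Finset.sum_range_succ, Finset.sum_range_succ, Finset.sum_range_zero,
    abs_neg, abs_of_nonneg hb0] at hE2
  norm_num at hE1 hE2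
  -- hE1 : |a + a^2/2 + log(1-a)| ≤ a^3/(1-a)
  have hE1' : |Real.log (1 - a) + (a + a ^ 2 / 2)| ≤ 2 * a ^ 3 := by
    have h5 : a ^ 3 / (1 - a) ≤ 2 * a ^ 3 := by
      rw [div_le_iff₀ (by linarith)]
      nlinarith [pow_nonneg ha0 3]
    calc |Real.log (1 - a) + (a + a ^ 2 / 2)| = |a + a ^ 2 / 2 + Real.log (1 - a)| := by
          ring_nf
      _ ≤ a ^ 3 / (1 - a) := hE1
      _ ≤ 2 * a ^ 3 := h5
  have hE2' : |Real.log (1 + b) + (-b + b ^ 2 / 2)| ≤ 2 * b ^ 3 := by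
    have h5 : b ^ 3 / (1 - b) ≤ 2 * b ^ 3 := by
      rw [div_le_iff₀ (by linarith)]
      nlinarith [pow_nonneg hb0 3]
    calc |Real.log (1 + b) + (-b + b ^ 2 / 2)| = |-b + b ^ 2 / 2 + Real.log (1 + b)| := by
          ring_nf
      _ ≤ b ^ 3 / (1 - b) := hE2
      _ ≤ 2 * b ^ 3 := h5
  -- rewrite bernKL
  have hKL : bernKL (x - δ) x = (x - δ) * Real.log (1 - a) + (1 - x + δ) * Real.log (1 + b) := by
    have h1 : (x - δ) / x = 1 - a := by
      rw [hδdef, hadef]; field_simp [hx0.ne']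
    have h2 : (1 - (x - δ)) / (1 - x) = 1 + b := by
      rw [hδdef, hbdef]; field_simp [hx1'.ne']; ring
    unfold bernKL
    rw [h1, h2]; ring
  set E₁ := Real.log (1 - a) + (a + a ^ 2 / 2) with hE1def
  set E₂ := Real.log (1 + b) + (-b + b ^ 2 / 2) with hE2def
  have hlog1 : Real.log (1 - a) = E₁ - a - a ^ 2 / 2 := by rw [hE1def]; ring
  have hlog2 : Real.log (1 + b) = E₂ + b - b ^ 2 / 2 := by rw [hE2def]; ring
  have hM : δ₀ ^ 2 * Real.log α * x * (1 - x) / (2 * α) = δ₀ ^ 2 * x * (1 - x) * t ^ 2 / 2 := by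
    rw [ht2]; field_simp
  have hmain : bernKL (x - δ) x - δ₀ ^ 2 * Real.log α * x * (1 - x) / (2 * α)
      = δ₀ ^ 3 * x * (1 - x) * t ^ 3 * (1 - 2 * x) / 2 + (x - δ) * E₁ + (1 - x + δ) * E₂ := by
    rw [hKL, hlog1, hlog2, hM, hδdef, hadef, hbdef]; ring
  have hK0 : 0 ≤ δ₀ ^ 3 * x * (1 - x) * t ^ 3 := by positivity
  have h1 : |δ₀ ^ 3 * x * (1 - x) * t ^ 3 * (1 - 2 * x) / 2| ≤ δ₀ ^ 3 * x * (1 - x) * t ^ 3 / 2 := by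
    have h12 : |1 - 2 * x| ≤ 1 := abs_le.mpr ⟨by linarith, by linarith⟩
    have heq : |δ₀ ^ 3 * x * (1 - x) * t ^ 3 * (1 - 2 * x) / 2|
        = δ₀ ^ 3 * x * (1 - x) * t ^ 3 * |1 - 2 * x| / 2 := by
      rw [abs_div, abs_mul, abs_of_nonneg hK0]
      norm_num
    rw [heq]
    have h13 := mul_le_mul_of_nonneg_left h12 hK0
    linarith
  have h2 : |(x - δ) * E₁| ≤ 2 * δ₀ ^ 3 * x * (1 - x) * t ^ 3 := by
    rw [abs_mul, abs_of_nonneg (by linarith : (0:ℝ) ≤ x - δ)]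
    calc (x - δ) * |E₁| ≤ x * (2 * a ^ 3) :=
          mul_le_mul (by linarith) hE1' (abs_nonneg _) hx0.le
      _ ≤ 2 * δ₀ ^ 3 * x * (1 - x) * t ^ 3 := by
          rw [hadef]; exact aux_cube1 δ₀ x t hδ₀ hx0 hx1 ht0
  have h3 : |(1 - x + δ) * E₂| ≤ 4 * δ₀ ^ 3 * x * (1 - x) * t ^ 3 := by
    rw [abs_mul, abs_of_nonneg (by linarith : (0:ℝ) ≤ 1 - x + δ)]
    calc (1 - x + δ) * |E₂| ≤ 2 * (1 - x) * (2 * b ^ 3) :=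
          mul_le_mul (by linarith) hE2' (abs_nonneg _) (by linarith)
      _ ≤ 4 * δ₀ ^ 3 * x * (1 - x) * t ^ 3 := by
          rw [hbdef]; exact aux_cube2 δ₀ x t hδ₀ hx0 hx1 ht0
  have hD : |bernKL (x - δ) x - δ₀ ^ 2 * Real.log α * x * (1 - x) / (2 * α)|
      ≤ 7 * δ₀ ^ 3 * x * (1 - x) * t ^ 3 := by
    rw [hmain]
    refine le_trans (abs_add_le _ _) ?_
    refine le_trans (add_le_add_left (abs_add_le _ _) _) ?_
    linarith
  have h7 : (Real.log α / α) ^ ((3:ℝ)/2) = t ^ 3 := by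
    rw [← ht2, ← Real.rpow_natCast t 2, ← Real.rpow_mul ht0]
    norm_num
  constructor
  · rw [h7]
    exact le_trans hD (aux_C δ₀ x t hδ₀ hx0 hx1 ht0)
  · have h8 : δ ^ 2 / (3 * x * (1 - x)) = δ₀ ^ 2 * x * (1 - x) * t ^ 2 / 3 := by
      rw [hδdef]; field_simp
    rw [h8]
    have h9 := (abs_le.mp hD).1
    rw [hM] at h9
    exact aux_lower δ₀ x t _ hδ₀ hx0 hx1 ht0 htle (by linarith)
end

section
/- Let a, b > 0, 0 < τ₁ < a, 0 < τ₂ < b, and suppose a < 2 and b < 2. Then log(Γ(a-τ₁)Γ(b-τ₂)/(Γ(a+τ₁)Γ(b+τ₂))) + log(Γ(a+b+τ₁+τ₂)/Γ(a+b-τ₁-τ₂)) ≤ 2τ₁/(a-τ₁) + 2τ₂/(b-τ₂) + C·(τ₁+τ₂) for some absolute constant C > 0. -/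
open Real Set

private lemma grb_lg_half : Real.log (Real.Gamma (1/2)) = Real.log π / 2 := by
  rw [Real.Gamma_one_half_eq, Real.log_sqrt Real.pi_pos.le]

private lemma grb_slope_lb {x y : ℝ} (hx : 1 ≤ x) (hxy : x < y) :
    -(Real.log π) ≤ (Real.log (Real.Gamma y) - Real.log (Real.Gamma x)) / (y - x) := by
  have hconv := Real.convexOn_log_Gamma
  have h0 : (1:ℝ)/2 ∈ Ioi (0:ℝ) := by norm_num
  have h1 : (1:ℝ) ∈ Ioi (0:ℝ) := by norm_num
  have hxmem : x ∈ Ioi (0:ℝ) := by simp; linarith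
  have hymem : y ∈ Ioi (0:ℝ) := by simp; linarith
  have base : ((Real.log ∘ Real.Gamma) 1 - (Real.log ∘ Real.Gamma) (1/2)) / (1 - 1/2)
      = -(Real.log π) := by
    simp only [Function.comp_apply, Real.Gamma_one, Real.log_one, grb_lg_half]
    ring
  rcases eq_or_lt_of_le hx with h | h
  · subst h
    have := hconv.slope_mono_adjacent h0 hymem (by norm_num) hxy
    rw [base] at this
    simpa using this
  · have s1 := hconv.slope_mono_adjacent h0 hxmem (by norm_num) h
    have s2 := hconv.slope_mono_adjacent h1 hymem h hxy
    rw [base] at s1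
    calc -(Real.log π) ≤ _ := s1
      _ ≤ _ := s2

private lemma grb_diff_ub {x y : ℝ} (hx : 1 ≤ x) (hxy : x ≤ y) :
    Real.log (Real.Gamma x) - Real.log (Real.Gamma y) ≤ (y - x) * Real.log π := by
  rcases eq_or_lt_of_le hxy with h | h
  · rw [h]; simp
  · have := grb_slope_lb hx h
    have hpos : 0 < y - x := by linarith
    rw [le_div_iff₀ hpos] at this
    nlinarith

private lemma grb_f_lb {x : ℝ} (hx : 0 < x) : -(Real.log π) ≤ Real.log (Real.Gamma x) := by
  have hπ : 0 < Real.log π := Real.log_pos (by linarith [Real.pi_gt_three])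
  have hconv := Real.convexOn_log_Gamma
  rcases lt_trichotomy x 1 with h | h | h
  · have := hconv.slope_mono_adjacent (show x ∈ Ioi (0:ℝ) from hx) (show (2:ℝ) ∈ Ioi (0:ℝ) by norm_num) h (by norm_num)
    simp only [Function.comp_apply, Real.Gamma_one, Real.Gamma_two, Real.log_one] at this
    have h1 : 0 < 1 - x := by linarith
    have : (0 - Real.log (Real.Gamma x)) / (1 - x) ≤ 0 := by simpa using this
    rw [div_le_iff₀ h1] at this
    nlinarith
  · rw [h]; simp; linarith
  · rcases le_or_gt x 2 with h2 | h2
    · have := grb_slope_lb le_rfl h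
      have hp : 0 < x - 1 := by linarith
      rw [le_div_iff₀ hp] at this
      simp only [Real.Gamma_one, Real.log_one] at this
      nlinarith
    · have := hconv.slope_mono_adjacent (show (1:ℝ) ∈ Ioi (0:ℝ) by norm_num)
        (show x ∈ Ioi (0:ℝ) by simp; linarith) (by norm_num) h2
      simp only [Function.comp_apply, Real.Gamma_one, Real.Gamma_two, Real.log_one] at this
      have hp : 0 < x - 2 := by linarith
      have : (0:ℝ) ≤ (Real.log (Real.Gamma x) - 0) / (x - 2) := by simpa using this
      rw [le_div_iff₀ hp] at this
      nlinarith

private lemma grb_gamma_nine : Real.Gamma 9 = 40320 := by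
  rw [show (9:ℝ) = (8:ℕ)+1 by norm_num, Real.Gamma_nat_eq_factorial]
  norm_num [Nat.factorial]

private lemma grb_diff3 {u v : ℝ} (hu : 0 < u) (huv : u < v) (hv : v < 8) :
    Real.log (Real.Gamma v) - Real.log (Real.Gamma u) ≤
      (v - u) * (Real.log 40320 + Real.log π) := by
  have hπ : 0 < Real.log π := Real.log_pos (by linarith [Real.pi_gt_three])
  have h4 : 0 < Real.log 40320 := Real.log_pos (by norm_num)
  have hconv := Real.convexOn_log_Gamma
  have := hconv.slope_mono_adjacent (show u ∈ Ioi (0:ℝ) from hu)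
    (show (9:ℝ) ∈ Ioi (0:ℝ) by norm_num) huv (by linarith)
  simp only [Function.comp_apply, grb_gamma_nine] at this
  have hvpos : 0 < v := lt_trans hu huv
  have hflb := grb_f_lb hvpos
  have hd1 : (0:ℝ) < v - u := by linarith
  have hd2 : (1:ℝ) ≤ 9 - v := by linarith
  have hnum : Real.log 40320 - Real.log (Real.Gamma v) ≤ Real.log 40320 + Real.log π := by
    linarith
  have hstep : (Real.log 40320 - Real.log (Real.Gamma v)) / (9 - v) ≤
      Real.log 40320 + Real.log π := by
    rw [div_le_iff₀ (by linarith : (0:ℝ) < 9 - v)]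
    nlinarith
  have := le_trans this hstep
  rw [div_le_iff₀ hd1] at this
  nlinarith

private lemma grb_rec {x : ℝ} (hx : 0 < x) :
    Real.log (Real.Gamma x) = Real.log (Real.Gamma (x+1)) - Real.log x := by
  rw [Real.Gamma_add_one (ne_of_gt hx), Real.log_mul (ne_of_gt hx)
    (ne_of_gt (Real.Gamma_pos_of_pos hx))]
  ring

theorem gamma_ratio_bound_small :
    ∃ C > 0, ∀ a b τ₁ τ₂ : ℝ, 0 < τ₁ → τ₁ < a → 0 < τ₂ → τ₂ < b → a < 2 → b < 2 →
      Real.log (Real.Gamma (a - τ₁) * Real.Gamma (b - τ₂) /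
          (Real.Gamma (a + τ₁) * Real.Gamma (b + τ₂))) +
        Real.log (Real.Gamma (a + b + (τ₁ + τ₂)) / Real.Gamma (a + b - (τ₁ + τ₂))) ≤
      2 * τ₁ / (a - τ₁) + 2 * τ₂ / (b - τ₂) + C * (τ₁ + τ₂) := by
  have hπ : 0 < Real.log π := Real.log_pos (by linarith [Real.pi_gt_three])
  have h4 : 0 < Real.log 40320 := Real.log_pos (by norm_num)
  refine ⟨4 * Real.log π + 2 * Real.log 40320, by linarith, ?_⟩
  intro a b τ₁ τ₂ hτ₁ hτ₁a hτ₂ hτ₂b ha hb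
  have h1 : 0 < a - τ₁ := by linarith
  have h2 : 0 < b - τ₂ := by linarith
  have h3 : 0 < a + τ₁ := by linarith
  have h4' : 0 < b + τ₂ := by linarith
  have g1 := Real.Gamma_pos_of_pos h1
  have g2 := Real.Gamma_pos_of_pos h2
  have g3 := Real.Gamma_pos_of_pos h3
  have g4 := Real.Gamma_pos_of_pos h4'
  have hu : 0 < a + b - (τ₁ + τ₂) := by linarith
  have hv : a + b - (τ₁ + τ₂) < a + b + (τ₁ + τ₂) := by linarith
  have hv8 : a + b + (τ₁ + τ₂) < 8 := by linarith
  have g5 := Real.Gamma_pos_of_pos hu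
  have g6 := Real.Gamma_pos_of_pos (lt_trans hu hv)
  -- rewrite logs
  rw [Real.log_div (by positivity) (by positivity), Real.log_mul (ne_of_gt g1) (ne_of_gt g2),
    Real.log_mul (ne_of_gt g3) (ne_of_gt g4), Real.log_div (ne_of_gt g6) (ne_of_gt g5)]
  -- bound for the a-part
  have boundA : Real.log (Real.Gamma (a - τ₁)) - Real.log (Real.Gamma (a + τ₁)) ≤
      2 * τ₁ * Real.log π + 2 * τ₁ / (a - τ₁) := by
    rw [grb_rec h1, grb_rec h3]
    have hd : Real.log (Real.Gamma (a - τ₁ + 1)) - Real.log (Real.Gamma (a + τ₁ + 1)) ≤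
        (2 * τ₁) * Real.log π := by
      have := grb_diff_ub (x := a - τ₁ + 1) (y := a + τ₁ + 1) (by linarith) (by linarith)
      calc Real.log (Real.Gamma (a - τ₁ + 1)) - Real.log (Real.Gamma (a + τ₁ + 1)) ≤
          (a + τ₁ + 1 - (a - τ₁ + 1)) * Real.log π := this
        _ = (2 * τ₁) * Real.log π := by ring
    have hlog : Real.log (a + τ₁) - Real.log (a - τ₁) ≤ 2 * τ₁ / (a - τ₁) := by
      rw [← Real.log_div (ne_of_gt h3) (ne_of_gt h1)]
      have hq : 0 < (a + τ₁) / (a - τ₁) := by positivity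
      have := Real.log_le_sub_one_of_pos hq
      have heq : (a + τ₁) / (a - τ₁) - 1 = 2 * τ₁ / (a - τ₁) := by
        field_simp; ring
      linarith [heq ▸ this]
    linarith
  have boundB : Real.log (Real.Gamma (b - τ₂)) - Real.log (Real.Gamma (b + τ₂)) ≤
      2 * τ₂ * Real.log π + 2 * τ₂ / (b - τ₂) := by
    rw [grb_rec h2, grb_rec h4']
    have hd : Real.log (Real.Gamma (b - τ₂ + 1)) - Real.log (Real.Gamma (b + τ₂ + 1)) ≤
        (2 * τ₂) * Real.log π := by
      have := grb_diff_ub (x := b - τ₂ + 1) (y := b + τ₂ + 1) (by linarith) (by linarith)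
      calc Real.log (Real.Gamma (b - τ₂ + 1)) - Real.log (Real.Gamma (b + τ₂ + 1)) ≤
          (b + τ₂ + 1 - (b - τ₂ + 1)) * Real.log π := this
        _ = (2 * τ₂) * Real.log π := by ring
    have hlog : Real.log (b + τ₂) - Real.log (b - τ₂) ≤ 2 * τ₂ / (b - τ₂) := by
      rw [← Real.log_div (ne_of_gt h4') (ne_of_gt h2)]
      have hq : 0 < (b + τ₂) / (b - τ₂) := by positivity
      have := Real.log_le_sub_one_of_pos hq
      have heq : (b + τ₂) / (b - τ₂) - 1 = 2 * τ₂ / (b - τ₂) := by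
        field_simp; ring
      linarith [heq ▸ this]
    linarith
  have boundC : Real.log (Real.Gamma (a + b + (τ₁ + τ₂))) -
      Real.log (Real.Gamma (a + b - (τ₁ + τ₂))) ≤
      2 * (τ₁ + τ₂) * (Real.log 40320 + Real.log π) := by
    have := grb_diff3 hu hv hv8
    calc Real.log (Real.Gamma (a + b + (τ₁ + τ₂))) -
        Real.log (Real.Gamma (a + b - (τ₁ + τ₂))) ≤
        (a + b + (τ₁ + τ₂) - (a + b - (τ₁ + τ₂))) * (Real.log 40320 + Real.log π) := this
      _ = 2 * (τ₁ + τ₂) * (Real.log 40320 + Real.log π) := by ring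
  nlinarith [boundA, boundB, boundC]
end

section
/- Let a, b > 2, 0 < τ₁ < a - 2, 0 < τ₂ < b - 2, and set η̄ = a+b, τ̄ = τ₁+τ₂. Then log(Γ(a-τ₁)Γ(b-τ₂)/(Γ(a+τ₁)Γ(b+τ₂))) + log(Γ(η̄+τ̄)/Γ(η̄-τ̄)) ≤ 2τ̄·log(η̄+1). -/
open Real Set

/-- Key telescoping lemma: for `e ≥ 2` and `0 ≤ t < e`,
`log Γ(e+t) - log Γ(e-t) ≤ 2 t log (e+1)`. -/
lemma logGamma_sym_diff_le (e : ℝ) (he : 2 ≤ e) :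
    ∀ n : ℕ, ∀ t : ℝ, 0 ≤ t → t ≤ n → t < e →
      Real.log (Real.Gamma (e + t)) - Real.log (Real.Gamma (e - t)) ≤
        2 * t * Real.log (e + 1) := by
  intro n
  induction n with
  | zero =>
    intro t ht0 htn _
    have ht : t = 0 := le_antisymm (by exact_mod_cast htn) ht0
    simp [ht]
  | succ n ih =>
    intro t ht0 htn hte
    by_cases h1 : t ≤ 1
    · -- base case: 0 ≤ t ≤ 1
      rcases eq_or_lt_of_le ht0 with h0 | h0
      · simp [← h0]
      · have hemt : (0:ℝ) < e - t := by linarith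
        have hept : (0:ℝ) < e + t := by linarith
        have hG := Real.Gamma_pos_of_pos hept
        have hslope := Real.convexOn_log_Gamma.slope_mono_adjacent
          (x := e - t) (y := e + t) (z := e + t + 1)
          (by exact mem_Ioi.mpr hemt) (by simp only [mem_Ioi]; linarith)
          (by linarith) (by linarith)
        have hadd : Real.Gamma (e + t + 1) = (e + t) * Real.Gamma (e + t) :=
          Real.Gamma_add_one (ne_of_gt hept)
        have hlog : Real.log (Real.Gamma (e + t + 1)) =
            Real.log (e + t) + Real.log (Real.Gamma (e + t)) := by
          rw [hadd, Real.log_mul (ne_of_gt hept) (ne_of_gt hG)]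
        simp only [Function.comp_apply] at hslope
        rw [hlog] at hslope
        have h2t : (0:ℝ) < 2 * t := by linarith
        have heq : e + t - (e - t) = 2 * t := by ring
        have heq2 : e + t + 1 - (e + t) = 1 := by ring
        rw [heq, heq2] at hslope
        have hslope' : Real.log (Real.Gamma (e + t)) - Real.log (Real.Gamma (e - t)) ≤
            2 * t * Real.log (e + t) := by
          have := (div_le_iff₀ h2t).mp hslope
          calc Real.log (Real.Gamma (e + t)) - Real.log (Real.Gamma (e - t))
              ≤ (Real.log (e + t) + Real.log (Real.Gamma (e + t)) -
                  Real.log (Real.Gamma (e + t))) / 1 * (2 * t) := this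
            _ = 2 * t * Real.log (e + t) := by ring
        have hmono : Real.log (e + t) ≤ Real.log (e + 1) :=
          Real.log_le_log hept (by linarith)
        calc Real.log (Real.Gamma (e + t)) - Real.log (Real.Gamma (e - t))
            ≤ 2 * t * Real.log (e + t) := hslope'
          _ ≤ 2 * t * Real.log (e + 1) := by
              apply mul_le_mul_of_nonneg_left hmono (by linarith)
    · -- inductive step: t > 1
      push_neg at h1
      have ht1 : (0:ℝ) ≤ t - 1 := by linarith
      have htn' : t - 1 ≤ n := by
        have : t ≤ (n:ℝ) + 1 := by exact_mod_cast htn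
        linarith
      have hte' : t - 1 < e := by linarith
      have hIH := ih (t - 1) ht1 htn' hte'
      have hemt : (0:ℝ) < e - t := by linarith
      have hept1 : (0:ℝ) < e + t - 1 := by linarith
      -- Γ(e+t) = (e+t-1) Γ(e+(t-1))
      have hA : Real.Gamma (e + t) = (e + t - 1) * Real.Gamma (e + (t - 1)) := by
        have : e + t = (e + t - 1) + 1 := by ring
        rw [this, Real.Gamma_add_one (ne_of_gt hept1)]
        ring_nf
      -- Γ(e-(t-1)) = (e-t) Γ(e-t)
      have hB : Real.Gamma (e - (t - 1)) = (e - t) * Real.Gamma (e - t) := by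
        have : e - (t - 1) = (e - t) + 1 := by ring
        rw [this, Real.Gamma_add_one (ne_of_gt hemt)]
      have hGA : (0:ℝ) < Real.Gamma (e + (t - 1)) :=
        Real.Gamma_pos_of_pos (by linarith)
      have hGB : (0:ℝ) < Real.Gamma (e - t) := Real.Gamma_pos_of_pos hemt
      have hlogA : Real.log (Real.Gamma (e + t)) =
          Real.log (e + t - 1) + Real.log (Real.Gamma (e + (t - 1))) := by
        rw [hA, Real.log_mul (ne_of_gt hept1) (ne_of_gt hGA)]
      have hlogB : Real.log (Real.Gamma (e - (t - 1))) =
          Real.log (e - t) + Real.log (Real.Gamma (e - t)) := by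
        rw [hB, Real.log_mul (ne_of_gt hemt) (ne_of_gt hGB)]
      -- key arithmetic: (e+t-1)(e-t) ≤ (e+1)^2
      have harith : (e + t - 1) * (e - t) ≤ (e + 1) ^ 2 := by nlinarith
      have hprod : Real.log (e + t - 1) + Real.log (e - t) ≤ 2 * Real.log (e + 1) := by
        rw [← Real.log_mul (ne_of_gt hept1) (ne_of_gt hemt)]
        have h2 : (2:ℝ) * Real.log (e + 1) = Real.log ((e + 1) ^ 2) := by
          rw [Real.log_pow]; norm_num
        rw [h2]
        exact Real.log_le_log (by positivity) harith
      have expand : Real.log (Real.Gamma (e + t)) - Real.log (Real.Gamma (e - t)) =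
          Real.log (e + t - 1) + Real.log (e - t) +
            (Real.log (Real.Gamma (e + (t - 1))) - Real.log (Real.Gamma (e - (t - 1)))) := by
        rw [hlogA, hlogB]; ring
      rw [expand]
      have : 2 * (t - 1) * Real.log (e + 1) + 2 * Real.log (e + 1) =
          2 * t * Real.log (e + 1) := by ring
      linarith [hIH, hprod]

theorem gamma_ratio_bound_large (a b τ₁ τ₂ : ℝ) (ha : 2 < a) (hb : 2 < b)
    (hτ₁ : 0 < τ₁) (hτ₁a : τ₁ < a - 2) (hτ₂ : 0 < τ₂) (hτ₂b : τ₂ < b - 2) :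
    Real.log (Real.Gamma (a - τ₁) * Real.Gamma (b - τ₂) /
        (Real.Gamma (a + τ₁) * Real.Gamma (b + τ₂))) +
      Real.log (Real.Gamma (a + b + (τ₁ + τ₂)) / Real.Gamma (a + b - (τ₁ + τ₂))) ≤
    2 * (τ₁ + τ₂) * Real.log (a + b + 1) := by
  have hG1 : Real.Gamma (a - τ₁) ≤ Real.Gamma (a + τ₁) :=
    (Real.Gamma_strictMonoOn_Ici (by simp only [mem_Ici]; linarith)
      (by simp only [mem_Ici]; linarith) (by linarith)).le
  have hG2 : Real.Gamma (b - τ₂) ≤ Real.Gamma (b + τ₂) :=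
    (Real.Gamma_strictMonoOn_Ici (by simp only [mem_Ici]; linarith)
      (by simp only [mem_Ici]; linarith) (by linarith)).le
  have hP1 : (0:ℝ) < Real.Gamma (a - τ₁) := Real.Gamma_pos_of_pos (by linarith)
  have hP2 : (0:ℝ) < Real.Gamma (b - τ₂) := Real.Gamma_pos_of_pos (by linarith)
  have hP3 : (0:ℝ) < Real.Gamma (a + τ₁) := Real.Gamma_pos_of_pos (by linarith)
  have hP4 : (0:ℝ) < Real.Gamma (b + τ₂) := Real.Gamma_pos_of_pos (by linarith)
  -- first term is nonpositive
  have hterm1 : Real.log (Real.Gamma (a - τ₁) * Real.Gamma (b - τ₂) /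
      (Real.Gamma (a + τ₁) * Real.Gamma (b + τ₂))) ≤ 0 := by
    apply Real.log_nonpos
    · positivity
    · rw [div_le_one (by positivity)]
      exact mul_le_mul hG1 hG2 hP2.le hP3.le
  -- second term
  have he : (2:ℝ) ≤ a + b := by linarith
  have ht0 : (0:ℝ) ≤ τ₁ + τ₂ := by linarith
  have hte : τ₁ + τ₂ < a + b := by linarith
  have hQ1 : (0:ℝ) < Real.Gamma (a + b + (τ₁ + τ₂)) :=
    Real.Gamma_pos_of_pos (by linarith)
  have hQ2 : (0:ℝ) < Real.Gamma (a + b - (τ₁ + τ₂)) :=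
    Real.Gamma_pos_of_pos (by linarith)
  have hterm2 : Real.log (Real.Gamma (a + b + (τ₁ + τ₂)) /
      Real.Gamma (a + b - (τ₁ + τ₂))) ≤ 2 * (τ₁ + τ₂) * Real.log (a + b + 1) := by
    rw [Real.log_div (ne_of_gt hQ1) (ne_of_gt hQ2)]
    exact logGamma_sym_diff_le (a + b) he ⌈τ₁ + τ₂⌉₊ (τ₁ + τ₂) ht0
      (Nat.le_ceil _) hte
  linarith
end

section
/- Let 0 < ε < 1, α > 0, and 0 < x < ε/3. Then the Beta(α/(1-ε), α/ε) density satisfies g_{α,ε}(x) ≤ C·√α/(x(1-x))·(2x/(x+ε))^{α/(2(1-ε))} for some absolute constant C > 0 and all α large enough, and consequently ∫₀^{ε/3} g_{α,ε}(x) dx ≤ C·α^{-1/2}·(1-ε)·(3/2)^{-α/(2(1-ε))}. -/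
open MeasureTheory intervalIntegral Real

set_option maxHeartbeats 1000000

/-- Beta density with parameters a = α/(1-ε), b = α/ε. -/
noncomputable def betaDens (α ε x : ℝ) : ℝ :=
  x ^ (α / (1 - ε) - 1) * (1 - x) ^ (α / ε - 1) *
    (Real.Gamma (α / (ε * (1 - ε))) / (Real.Gamma (α / (1 - ε)) * Real.Gamma (α / ε)))

lemma real_beta {a b : ℝ} (ha : 0 < a) (hb : 0 < b) :
    Real.Gamma a * Real.Gamma b =
      Real.Gamma (a + b) * ∫ x in (0:ℝ)..1, x ^ (a-1) * (1-x) ^ (b-1) := by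
  have h := Complex.Gamma_mul_Gamma_eq_betaIntegral (s := (a:ℂ)) (t := (b:ℂ))
    (by simpa using ha) (by simpa using hb)
  have hB : Complex.betaIntegral (a:ℂ) (b:ℂ)
      = ((∫ x in (0:ℝ)..1, x ^ (a-1) * (1-x) ^ (b-1) : ℝ) : ℂ) := by
    rw [Complex.betaIntegral, ← intervalIntegral.integral_ofReal]
    apply intervalIntegral.integral_congr
    intro x hx
    rw [Set.uIcc_of_le (by norm_num : (0:ℝ) ≤ 1)] at hx
    obtain ⟨hx0, hx1⟩ := hx
    show (x:ℂ) ^ ((a:ℂ) - 1) * (1 - (x:ℂ)) ^ ((b:ℂ) - 1) = ((x ^ (a-1) * (1-x) ^ (b-1) : ℝ) : ℂ)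
    rw [show ((a:ℂ) - 1) = ((a - 1 : ℝ) : ℂ) by push_cast; ring,
      show ((b:ℂ) - 1) = ((b - 1 : ℝ) : ℂ) by push_cast; ring,
      show (1 - (x:ℂ)) = ((1 - x : ℝ) : ℂ) by push_cast; ring,
      ← Complex.ofReal_cpow hx0, ← Complex.ofReal_cpow (by linarith : (0:ℝ) ≤ 1 - x),
      ← Complex.ofReal_mul]
  rw [hB, ← Complex.ofReal_add, Complex.Gamma_ofReal, Complex.Gamma_ofReal,
    Complex.Gamma_ofReal, ← Complex.ofReal_mul, ← Complex.ofReal_mul] at h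
  exact_mod_cast h

lemma log_nine_halves : (3:ℝ)/2 ≤ 2 * Real.log 3 - Real.log 2 := by
  have h : (3:ℝ)/2 ≤ Real.log (9/2) := by
    rw [Real.le_log_iff_exp_le (by norm_num)]
    have h1 : Real.exp 1 < 2.7182818286 := Real.exp_one_lt_d9
    have h2 : Real.exp (3/2) * Real.exp (3/2) = Real.exp 1 * Real.exp 1 * Real.exp 1 := by
      rw [← Real.exp_add, ← Real.exp_add, ← Real.exp_add]; norm_num
    nlinarith [Real.exp_pos (3/2 : ℝ), Real.exp_pos (1:ℝ)]
  have h9 : Real.log (9/2) = 2 * Real.log 3 - Real.log 2 := by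
    rw [Real.log_div (by norm_num) (by norm_num), show (9:ℝ) = 3^2 by norm_num, Real.log_pow]
    push_cast; ring
  linarith

lemma log_four_thirds : Real.log (4/3) = 2 * Real.log 2 - Real.log 3 := by
  rw [Real.log_div (by norm_num) (by norm_num), show (4:ℝ) = 2^2 by norm_num, Real.log_pow]
  push_cast; ring

lemma hr_bound {r : ℝ} (h0 : 0 < r) (h3 : r ≤ 1/3) :
    Real.log r + (1 - r) ≤ -1/12 + 1/2 * Real.log (2*r/(1+r)) := by
  have l1 : Real.log (3*r) ≤ 3*r - 1 := Real.log_le_sub_one_of_pos (by linarith)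
  rw [Real.log_mul (by norm_num) (ne_of_gt h0)] at l1
  have l2 : Real.log (2*r/(1+r)) = Real.log 2 + Real.log r - Real.log (1+r) := by
    rw [Real.log_div (by positivity) (by positivity),
      Real.log_mul (by norm_num) (ne_of_gt h0)]
  have l3 : Real.log (1+r) ≤ Real.log (4/3) :=
    Real.log_le_log (by positivity) (by linarith)
  rw [log_four_thirds] at l3
  have l4 := log_nine_halves
  rw [l2]
  linarith

lemma sqrt_le_exp {α : ℝ} (hα : 0 ≤ α) : Real.sqrt α ≤ 2 * Real.exp (α/12) := by
  have h1 : Real.sqrt α ≤ 2 + α/6 := by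
    have := Real.sqrt_le_sqrt (show α ≤ (2 + α/6)^2 by nlinarith [sq_nonneg (α/6 - 1), sq_nonneg α])
    rwa [Real.sqrt_sq (by linarith)] at this
  have h2 : (1 : ℝ) + α/12 ≤ Real.exp (α/12) := by
    have := Real.add_one_le_exp (α/12); linarith
  linarith

lemma beta_int_lb {ε α : ℝ} (hε0 : 0 < ε) (hε1 : ε < 1) (hα : 2 ≤ α) :
    ε ^ (α/(1-ε)) * (1-ε) ^ (α/ε) * Real.exp (-2) / α ≤
      ∫ x in (0:ℝ)..1, x ^ (α/(1-ε) - 1) * (1-x) ^ (α/ε - 1) := by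
  have h1ε : 0 < 1 - ε := by linarith
  set a := α/(1-ε) with ha_def
  set b := α/ε with hb_def
  have hα0 : (0:ℝ) < α := by linarith
  have ha1 : 2 ≤ a := le_trans hα (by rw [ha_def]; rw [le_div_iff₀ h1ε]; nlinarith)
  have hb1 : 2 ≤ b := le_trans hα (by rw [hb_def]; rw [le_div_iff₀ hε0]; nlinarith)
  set δ := ε*(1-ε)/α with hδ_def
  have hδ0 : 0 < δ := by positivity
  have hδ1 : ε + δ ≤ 1 := by
    have : δ ≤ (1-ε)/2 := by
      rw [hδ_def, div_le_div_iff₀ hα0 (by norm_num)]; nlinarith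
    linarith
  have hcont : Continuous (fun x : ℝ => x ^ (a - 1) * (1-x) ^ (b - 1)) := by
    apply Continuous.mul
    · exact continuous_id.rpow_const (fun x => Or.inr (by linarith))
    · exact (continuous_const.sub continuous_id).rpow_const (fun x => Or.inr (by linarith))
  have hint : ∀ u v : ℝ, IntervalIntegrable (fun x : ℝ => x ^ (a - 1) * (1-x) ^ (b - 1))
      volume u v := fun u v => hcont.intervalIntegrable u v
  -- lower bound the middle piece
  have hmid : δ * (ε ^ (a-1) * (1-ε-δ) ^ (b-1)) ≤
      ∫ x in ε..(ε+δ), x ^ (a - 1) * (1-x) ^ (b - 1) := by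
    have hle : ∀ x ∈ Set.Icc ε (ε+δ),
        ε ^ (a-1) * (1-ε-δ) ^ (b-1) ≤ x ^ (a - 1) * (1-x) ^ (b - 1) := by
      intro x hx
      obtain ⟨hx1, hx2⟩ := hx
      have hx0 : (0:ℝ) < x := lt_of_lt_of_le hε0 hx1
      apply mul_le_mul
      · exact Real.rpow_le_rpow hε0.le hx1 (by linarith)
      · exact Real.rpow_le_rpow (by linarith) (by linarith) (by linarith)
      · exact Real.rpow_nonneg (by linarith) _
      · exact Real.rpow_nonneg hx0.le _
    have hm := intervalIntegral.integral_mono_on (by linarith : ε ≤ ε + δ)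
      intervalIntegrable_const (hint ε (ε+δ)) hle
    rw [intervalIntegral.integral_const, smul_eq_mul, add_sub_cancel_left] at hm
    exact hm
  have hsplit : (∫ x in ε..(ε+δ), x ^ (a - 1) * (1-x) ^ (b - 1)) ≤
      ∫ x in (0:ℝ)..1, x ^ (a - 1) * (1-x) ^ (b - 1) := by
    have e1 : (∫ x in (0:ℝ)..ε, x ^ (a - 1) * (1-x) ^ (b - 1)) +
        (∫ x in ε..1, x ^ (a - 1) * (1-x) ^ (b - 1)) =
        ∫ x in (0:ℝ)..1, x ^ (a - 1) * (1-x) ^ (b - 1) :=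
      intervalIntegral.integral_add_adjacent_intervals (hint 0 ε) (hint ε 1)
    have e2 : (∫ x in ε..(ε+δ), x ^ (a - 1) * (1-x) ^ (b - 1)) +
        (∫ x in (ε+δ)..1, x ^ (a - 1) * (1-x) ^ (b - 1)) =
        ∫ x in ε..1, x ^ (a - 1) * (1-x) ^ (b - 1) :=
      intervalIntegral.integral_add_adjacent_intervals (hint ε (ε+δ)) (hint (ε+δ) 1)
    have p1 : 0 ≤ ∫ x in (0:ℝ)..ε, x ^ (a - 1) * (1-x) ^ (b - 1) := by
      apply intervalIntegral.integral_nonneg hε0.le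
      intro x hx
      have : x ≤ 1 := le_trans hx.2 hε1.le
      exact mul_nonneg (Real.rpow_nonneg hx.1 _) (Real.rpow_nonneg (by linarith) _)
    have p2 : 0 ≤ ∫ x in (ε+δ)..1, x ^ (a - 1) * (1-x) ^ (b - 1) := by
      apply intervalIntegral.integral_nonneg hδ1
      intro x hx
      have h0x : 0 ≤ x := le_trans (by positivity) hx.1
      exact mul_nonneg (Real.rpow_nonneg h0x _) (Real.rpow_nonneg (by linarith [hx.2]) _)
    linarith
  refine le_trans ?_ (le_trans hmid hsplit)
  -- δ * (ε^(a-1) * (1-ε-δ)^(b-1)) ≥ ε^a (1-ε)^b exp(-2)/α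
  have key : ε ^ a * (1-ε) ^ b * Real.exp (-2) / α ≤ δ * (ε ^ (a-1) * (1-ε-δ) ^ (b-1)) := by
    set u := ε/α with hu_def
    have hu0 : 0 < u := by positivity
    have hu2 : u ≤ 1/2 := by
      rw [hu_def, div_le_div_iff₀ hα0 (by norm_num)]; nlinarith
    have hfac : 1 - ε - δ = (1-ε) * (1-u) := by
      rw [hδ_def, hu_def]; field_simp
    have h1u : 0 < 1 - u := by linarith
    have step1 : (1-ε-δ) ^ (b-1) = (1-ε) ^ (b-1) * (1-u) ^ (b-1) := by
      rw [hfac, Real.mul_rpow h1ε.le h1u.le]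
    have step2 : Real.exp (-2) ≤ (1-u) ^ (b-1) := by
      rw [Real.rpow_def_of_pos h1u]
      apply Real.exp_le_exp.mpr
      have hlog : -Real.log (1-u) ≤ 2*u := by
        have hy : Real.log (1/(1-u)) ≤ 1/(1-u) - 1 :=
          Real.log_le_sub_one_of_pos (by positivity)
        rw [Real.log_div (by norm_num) (ne_of_gt h1u), Real.log_one] at hy
        have : 1/(1-u) - 1 = u/(1-u) := by field_simp; ring
        rw [this] at hy
        have : u/(1-u) ≤ 2*u := by
          rw [div_le_iff₀ h1u]; nlinarith
        linarith
      have hb2 : b - 1 ≤ b := by linarith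
      have hlog0 : Real.log (1-u) ≤ 0 := Real.log_nonpos (by linarith) (by linarith)
      -- need -2 ≤ log(1-u) * (b-1); since log(1-u) ≥ -2u and b-1 ≤ b = 1/u... careful
      have hbu : b * u = 1 := by rw [hb_def, hu_def]; field_simp
      nlinarith [mul_le_mul_of_nonneg_left hlog (by linarith : (0:ℝ) ≤ b - 1),
        mul_nonneg (neg_nonneg.mpr hlog0) hu0.le]
    have hεa : ε ^ (a-1) = ε ^ a / ε := by
      rw [Real.rpow_sub hε0, Real.rpow_one]
    have hεb : (1-ε) ^ (b-1) = (1-ε) ^ b / (1-ε) := by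
      rw [Real.rpow_sub h1ε, Real.rpow_one]
    rw [step1, hεa, hεb, hδ_def]
    have hεapos : 0 < ε ^ a := Real.rpow_pos_of_pos hε0 a
    have hεbpos : 0 < (1-ε) ^ b := Real.rpow_pos_of_pos h1ε b
    calc ε ^ a * (1-ε) ^ b * Real.exp (-2) / α
        ≤ ε ^ a * (1-ε) ^ b * (1-u) ^ (b-1) / α := by
          exact (div_le_div_iff_of_pos_right hα0).mpr (mul_le_mul_of_nonneg_left step2 (by positivity))
      _ = ε*(1-ε)/α * (ε ^ a / ε * ((1-ε) ^ b / (1-ε) * (1-u) ^ (b-1))) := by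
          field_simp
  exact key

lemma gamma_ratio_ub {ε α : ℝ} (hε0 : 0 < ε) (hε1 : ε < 1) (hα : 2 ≤ α) :
    Real.Gamma (α / (ε * (1 - ε))) / (Real.Gamma (α / (1 - ε)) * Real.Gamma (α / ε))
      ≤ α * Real.exp 2 / (ε ^ (α/(1-ε)) * (1-ε) ^ (α/ε)) := by
  have h1ε : 0 < 1 - ε := by linarith
  have hα0 : (0:ℝ) < α := by linarith
  have ha : 0 < α/(1-ε) := by positivity
  have hb : 0 < α/ε := by positivity
  have hsum : α / (ε * (1-ε)) = α/(1-ε) + α/ε := by field_simp; ring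
  have hbeta := real_beta ha hb
  have hBlb := beta_int_lb hε0 hε1 hα
  set B := ∫ x in (0:ℝ)..1, x ^ (α/(1-ε) - 1) * (1-x) ^ (α/ε - 1) with hB_def
  have hBpos : 0 < B := lt_of_lt_of_le (by positivity) hBlb
  have hGa : 0 < Real.Gamma (α/(1-ε)) := Real.Gamma_pos_of_pos ha
  have hGb : 0 < Real.Gamma (α/ε) := Real.Gamma_pos_of_pos hb
  have hGs : 0 < Real.Gamma (α/(1-ε) + α/ε) := Real.Gamma_pos_of_pos (by positivity)
  have hratio : Real.Gamma (α / (ε * (1-ε))) / (Real.Gamma (α/(1-ε)) * Real.Gamma (α/ε))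
      = 1 / B := by
    rw [hsum]
    rw [hbeta]
    field_simp
  rw [hratio]
  rw [div_le_div_iff₀ hBpos (by positivity)]
  have hm := mul_le_mul_of_nonneg_left hBlb (by positivity : (0:ℝ) ≤ α * Real.exp 2)
  have he : Real.exp 2 * Real.exp (-2) = 1 := by rw [← Real.exp_add]; norm_num
  have heq : α * Real.exp 2 * (ε ^ (α/(1-ε)) * (1-ε) ^ (α/ε) * Real.exp (-2) / α)
      = ε ^ (α/(1-ε)) * (1-ε) ^ (α/ε) := by
    field_simp
    linear_combination he
  rw [one_mul, ← heq]
  exact hm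

lemma pointwise_bound {ε α x : ℝ} (hε0 : 0 < ε) (hε1 : ε < 1) (hα : 2 ≤ α)
    (hx : 0 < x) (hx3 : x ≤ ε/3) :
    betaDens α ε x ≤ 16 * Real.sqrt α / (x * (1-x)) *
      (2 * x / (x + ε)) ^ (α / (2 * (1 - ε))) := by
  have h1ε : 0 < 1 - ε := by linarith
  have hα0 : (0:ℝ) < α := by linarith
  set a := α/(1-ε) with ha_def
  set b := α/ε with hb_def
  set q := α/(2*(1-ε)) with hq_def
  have hxε : x < ε := by linarith
  have hx1 : x < 1 := by linarith
  have h1x : 0 < 1 - x := by linarith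
  have haα : α ≤ a := by rw [ha_def, le_div_iff₀ h1ε]; nlinarith
  have ha2 : 2 ≤ a := le_trans hα haα
  have hb2 : 2 ≤ b := le_trans hα (by rw [hb_def, le_div_iff₀ hε0]; nlinarith)
  have hxq : 0 < 2*x/(x+ε) := by positivity
  -- step 1: bound gamma ratio
  have h1 : betaDens α ε x ≤ x ^ (a-1) * (1-x) ^ (b-1) *
      (α * Real.exp 2 / (ε ^ a * (1-ε) ^ b)) := by
    unfold betaDens
    exact mul_le_mul_of_nonneg_left (gamma_ratio_ub hε0 hε1 hα)
      (mul_nonneg (Real.rpow_nonneg hx.le _) (Real.rpow_nonneg h1x.le _))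
  -- rewrite as product form
  have h2 : x ^ (a-1) * (1-x) ^ (b-1) * (α * Real.exp 2 / (ε ^ a * (1-ε) ^ b))
      = α * Real.exp 2 / (x * (1-x)) * ((x/ε) ^ a * ((1-x)/(1-ε)) ^ b) := by
    rw [Real.rpow_sub hx, Real.rpow_sub h1x, Real.rpow_one, Real.rpow_one,
      Real.div_rpow hx.le hε0.le, Real.div_rpow h1x.le h1ε.le]
    have := Real.rpow_pos_of_pos hε0 a
    have := Real.rpow_pos_of_pos h1ε b
    field_simp
  -- step 2: exponential bound
  have h3 : (x/ε) ^ a * ((1-x)/(1-ε)) ^ b ≤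
      Real.exp (-(α/12)) * (2*x/(x+ε)) ^ q := by
    rw [Real.rpow_def_of_pos (by positivity : 0 < x/ε),
      Real.rpow_def_of_pos (by positivity : 0 < (1-x)/(1-ε)),
      Real.rpow_def_of_pos hxq, ← Real.exp_add, ← Real.exp_add]
    apply Real.exp_le_exp.mpr
    set r := x/ε with hr_def
    have hr0 : 0 < r := by positivity
    have hr3 : r ≤ 1/3 := by rw [hr_def, div_le_div_iff₀ hε0 (by norm_num)]; linarith
    have hrx : 2*x/(x+ε) = 2*r/(1+r) := by
      rw [hr_def]; field_simp; ring
    have hkey := hr_bound hr0 hr3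
    have hlog2 : Real.log ((1-x)/(1-ε)) ≤ (ε - x)/(1-ε) := by
      have := Real.log_le_sub_one_of_pos (by positivity : 0 < (1-x)/(1-ε))
      have heq : (1-x)/(1-ε) - 1 = (ε - x)/(1-ε) := by field_simp; ring
      linarith [heq ▸ this]
    have hba : (ε - x)/(1-ε) * b = a * (1 - r) := by
      rw [ha_def, hb_def, hr_def]; field_simp
    have haq : a = 2*q := by rw [ha_def, hq_def]; field_simp
    have haq2 : a * (1-ε) = α := by rw [ha_def]; field_simp
    have hmul := mul_le_mul_of_nonneg_left hkey (by positivity : (0:ℝ) ≤ a)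
    -- a*(log r + (1-r)) ≤ a*(-1/12 + 1/2 * log(2r/(1+r)))
    have hstep : Real.log ((1-x)/(1-ε)) * b ≤ a * (1 - r) := by
      calc Real.log ((1-x)/(1-ε)) * b ≤ (ε - x)/(1-ε) * b :=
            mul_le_mul_of_nonneg_right hlog2 (by positivity)
        _ = a * (1-r) := hba
    have hlogxε : Real.log (x/ε) = Real.log r := by rw [hr_def]
    have hfin : -(a/12) ≤ -(α/12) := by
      have : α ≤ a := haα
      linarith
    calc Real.log (x/ε) * a + Real.log ((1-x)/(1-ε)) * b
        ≤ Real.log r * a + a * (1-r) := by rw [hlogxε]; linarith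
      _ = a * (Real.log r + (1 - r)) := by ring
      _ ≤ a * (-1/12 + 1/2 * Real.log (2*r/(1+r))) := hmul
      _ = -(a/12) + Real.log (2*r/(1+r)) * q := by rw [haq]; ring
      _ ≤ -(α/12) + Real.log (2*x/(x+ε)) * q := by rw [hrx]; linarith
  -- step 3: numeric
  have h4 : α * Real.exp 2 * Real.exp (-(α/12)) ≤ 16 * Real.sqrt α := by
    have hs := sqrt_le_exp hα0.le
    have he2 : Real.exp 2 < 8 := by
      have h1 : Real.exp 1 < 2.7182818286 := Real.exp_one_lt_d9
      have : Real.exp 2 = Real.exp 1 * Real.exp 1 := by rw [← Real.exp_add]; norm_num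
      nlinarith [Real.exp_pos (1:ℝ)]
    have hmul : Real.exp (α/12) * Real.exp (-(α/12)) = 1 := by
      rw [← Real.exp_add]; simp
    have hss : Real.sqrt α * Real.sqrt α = α := Real.mul_self_sqrt hα0.le
    have h5 : Real.sqrt α * Real.exp (-(α/12)) ≤ 2 := by
      have := mul_le_mul_of_nonneg_right hs (Real.exp_pos (-(α/12))).le
      rw [mul_assoc, hmul, mul_one] at this
      exact this
    have h6 : Real.sqrt α * Real.exp (-(α/12)) * Real.exp 2 ≤ 16 := by
      nlinarith [Real.exp_pos (-(α/12)), Real.exp_pos (2:ℝ), Real.sqrt_nonneg α]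
    have h8 : Real.sqrt α * (Real.sqrt α * Real.exp (-(α/12)) * Real.exp 2)
        ≤ Real.sqrt α * 16 := mul_le_mul_of_nonneg_left h6 (Real.sqrt_nonneg α)
    have h9 : α * Real.exp 2 * Real.exp (-(α/12))
        = Real.sqrt α * (Real.sqrt α * Real.exp (-(α/12)) * Real.exp 2) := by
      linear_combination (-(Real.exp 2 * Real.exp (-(α/12)))) * hss
    linarith
  calc betaDens α ε x ≤ α * Real.exp 2 / (x * (1-x)) * ((x/ε) ^ a * ((1-x)/(1-ε)) ^ b) := by
        rw [← h2]; exact h1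
    _ ≤ α * Real.exp 2 / (x * (1-x)) * (Real.exp (-(α/12)) * (2*x/(x+ε)) ^ q) := by
        apply mul_le_mul_of_nonneg_left h3 (by positivity)
    _ = α * Real.exp 2 * Real.exp (-(α/12)) / (x * (1-x)) * (2*x/(x+ε)) ^ q := by
        ring
    _ ≤ 16 * Real.sqrt α / (x * (1-x)) * (2*x/(x+ε)) ^ q := by
        have hd : (0:ℝ) < x * (1-x) := by nlinarith
        exact mul_le_mul_of_nonneg_right ((div_le_div_iff_of_pos_right hd).mpr h4)
          (Real.rpow_nonneg hxq.le q)

theorem betaDens_left_tail_bound :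
    ∃ C > 0, ∀ ε ∈ Set.Ioo (0 : ℝ) 1, ∃ α₀ : ℝ, ∀ α ≥ α₀,
      (∀ x : ℝ, 0 < x → x < ε / 3 →
        betaDens α ε x ≤
          C * Real.sqrt α / (x * (1 - x)) * (2 * x / (x + ε)) ^ (α / (2 * (1 - ε)))) ∧
      (∫ x in (0 : ℝ)..(ε / 3), betaDens α ε x) ≤
        C * α ^ (-(1 : ℝ) / 2) * (1 - ε) * ((3 : ℝ) / 2) ^ (-(α / (2 * (1 - ε)))) := by
  refine ⟨48, by norm_num, fun ε hε => ⟨2, fun α hα => ?_⟩⟩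
  obtain ⟨hε0, hε1⟩ := hε
  have h1ε : 0 < 1 - ε := by linarith
  have hα0 : (0:ℝ) < α := by linarith
  set q := α/(2*(1-ε)) with hq_def
  have hq1 : 1 ≤ q := by
    rw [hq_def, le_div_iff₀ (by positivity)]; nlinarith
  have hq0 : 0 < q := by linarith
  constructor
  · intro x hx hx3
    calc betaDens α ε x ≤ 16 * Real.sqrt α / (x * (1-x)) * (2*x/(x+ε)) ^ q :=
          pointwise_bound hε0 hε1 hα hx hx3.le
      _ ≤ 48 * Real.sqrt α / (x * (1-x)) * (2*x/(x+ε)) ^ q := by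
          have hx1 : x < 1 := by linarith
          apply mul_le_mul_of_nonneg_right ?_ (Real.rpow_nonneg (by positivity) q)
          exact (div_le_div_iff_of_pos_right (by nlinarith : (0:ℝ) < x * (1-x))).mpr
            (by nlinarith [Real.sqrt_nonneg α])
  · -- integral bound
    set F := fun x : ℝ => 24 * Real.sqrt α * (2/ε) ^ q * x ^ (q - 1) with hF_def
    have hkey : ∀ x ∈ Set.Icc (0:ℝ) (ε/3), betaDens α ε x ≤ F x := by
      intro x hx
      obtain ⟨hx0, hx3⟩ := hx
      rcases eq_or_lt_of_le hx0 with h0 | hxpos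
      · rw [← h0]
        have ha1 : α/(1-ε) - 1 ≠ 0 := by
          have : 2 ≤ α/(1-ε) := le_trans hα (by rw [le_div_iff₀ h1ε]; nlinarith)
          intro h; rw [sub_eq_zero] at h; linarith
        have hq1' : q - 1 ≠ 0 := by
          intro h; rw [sub_eq_zero] at h
          have : (1:ℝ) < q := by
            rw [hq_def, lt_div_iff₀ (by positivity)]; nlinarith
          linarith
        simp [betaDens, hF_def, Real.zero_rpow ha1, Real.zero_rpow hq1']
      · have hx1 : x < 1 := by linarith
        have h1x : 0 < 1 - x := by linarith
        calc betaDens α ε x ≤ 16 * Real.sqrt α / (x * (1-x)) * (2*x/(x+ε)) ^ q :=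
              pointwise_bound hε0 hε1 hα hxpos hx3
          _ ≤ F x := by
              have hb1 : (2*x/(x+ε)) ^ q ≤ (2/ε) ^ q * x ^ q := by
                rw [← Real.mul_rpow (by positivity) hxpos.le]
                apply Real.rpow_le_rpow (by positivity) ?_ hq0.le
                rw [div_le_iff₀ (by positivity)]
                have : 2/ε*x*(x+ε) = 2*x + 2*x*x/ε := by field_simp; ring
                rw [this]
                have h0 : (0:ℝ) ≤ 2*x*x/ε := by positivity
                linarith
              have hxq : x ^ q = x ^ (q-1) * x := by
                rw [Real.rpow_sub hxpos, Real.rpow_one]; field_simp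
              have h23 : 2/3 ≤ 1 - x := by linarith
              calc 16 * Real.sqrt α / (x * (1-x)) * (2*x/(x+ε)) ^ q
                  ≤ 16 * Real.sqrt α / (x * (1-x)) * ((2/ε) ^ q * x ^ q) :=
                    mul_le_mul_of_nonneg_left hb1 (by positivity)
                _ = 16 * Real.sqrt α * (2/ε) ^ q * x ^ (q-1) / (1-x) := by
                    rw [hxq]; field_simp
                _ ≤ F x := by
                    rw [hF_def]
                    rw [div_le_iff₀ h1x]
                    have hnn : (0:ℝ) ≤ Real.sqrt α * (2/ε) ^ q * x ^ (q-1) := by positivity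
                    nlinarith [hnn]
    have hcont : Continuous (betaDens α ε) := by
      have ha1 : (0:ℝ) < α/(1-ε) - 1 := by
        have : 2 ≤ α/(1-ε) := le_trans hα (by rw [le_div_iff₀ h1ε]; nlinarith)
        linarith
      have hb1 : (0:ℝ) < α/ε - 1 := by
        have : 2 ≤ α/ε := le_trans hα (by rw [le_div_iff₀ hε0]; nlinarith)
        linarith
      unfold betaDens
      apply Continuous.mul ?_ continuous_const
      exact (continuous_id.rpow_const (fun x => Or.inr ha1.le)).mul
        ((continuous_const.sub continuous_id).rpow_const (fun x => Or.inr hb1.le))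
    have hcontF : Continuous F := by
      apply continuous_const.mul
      exact continuous_id.rpow_const (fun x => Or.inr (by linarith))
    have hmono := intervalIntegral.integral_mono_on (by positivity : (0:ℝ) ≤ ε/3)
      (hcont.intervalIntegrable (μ := volume) 0 (ε/3)) (hcontF.intervalIntegrable (μ := volume) 0 (ε/3)) hkey
    refine le_trans hmono ?_
    have hFint : (∫ x in (0:ℝ)..(ε/3), F x) = 24 * Real.sqrt α * (2/ε) ^ q * ((ε/3) ^ q / q) := by
      rw [hF_def]
      rw [intervalIntegral.integral_const_mul]
      congr 1
      rw [integral_rpow (Or.inl (by linarith : (-1:ℝ) < q - 1))]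
      have hq' : q - 1 + 1 = q := by ring
      rw [hq', Real.zero_rpow (ne_of_gt hq0)]
      ring
    rw [hFint]
    have e1 : (2/ε:ℝ) ^ q * (ε/3) ^ q = (2/3:ℝ) ^ q := by
      rw [← Real.mul_rpow (by positivity) (by positivity)]
      congr 1
      field_simp
    have e2 : ((3:ℝ)/2) ^ (-q) = (2/3:ℝ) ^ q := by
      rw [Real.rpow_neg (by norm_num : (0:ℝ) ≤ 3/2),
        ← Real.inv_rpow (by norm_num : (0:ℝ) ≤ 3/2)]
      norm_num
    have e3 : α ^ (-(1:ℝ)/2) = (Real.sqrt α)⁻¹ := by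
      rw [show (-(1:ℝ)/2) = -(1/2) by norm_num, Real.rpow_neg hα0.le,
        ← Real.sqrt_eq_rpow]
    rw [e2, e3]
    have hss : Real.sqrt α * Real.sqrt α = α := Real.mul_self_sqrt hα0.le
    have hs0 : 0 < Real.sqrt α := Real.sqrt_pos.mpr hα0
    have hfin : 24 * Real.sqrt α * (2/ε) ^ q * ((ε/3) ^ q / q)
        = 48 * (Real.sqrt α)⁻¹ * (1-ε) * (2/3:ℝ) ^ q := by
      rw [mul_div_assoc']
      rw [show 24 * Real.sqrt α * (2/ε) ^ q * (ε/3) ^ q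
        = 24 * Real.sqrt α * ((2/ε) ^ q * (ε/3) ^ q) by ring, e1]
      rw [div_eq_iff (ne_of_gt hq0)]
      rw [show (48:ℝ) * (Real.sqrt α)⁻¹ * (1-ε) * (2/3:ℝ) ^ q * q
        = 48 * (1-ε) * q * (2/3:ℝ) ^ q * (Real.sqrt α)⁻¹ by ring, hq_def]
      field_simp
      linear_combination 48 * hss
    rw [hfin]
end
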